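/- Let Q be a 3×3 real transition rate matrix with stationary probability row vector μ, and let Π be a 3×K state-dependent probability matrix with columns φ_k and Λ_k = diag(φ_k). If the rank of Π is 1 or 2, then for every t ≥ 0 and all observation symbols i, j, μ·Λ_i·exp(tQ)·Λ_j·e = μ·Λ_j·exp(tQ)·Λ_i·e; that is, the flux of the 2-dimensional likelihood function of the observed process vanishes. -/

import Mathlib

open Matrix NormedSpace

lemma exp_mulVec_fixed {n : ℕ} (A : Matrix (Fin n) (Fin n) ℝ) (v : Fin n → ℝ)
    (h : A *ᵥ v = 0) : NormedSpace.exp A *ᵥ v = v := by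
  letI : NormedRing (Matrix (Fin n) (Fin n) ℝ) := Matrix.linftyOpNormedRing
  letI : NormedAlgebra ℝ (Matrix (Fin n) (Fin n) ℝ) := Matrix.linftyOpNormedAlgebra
  let L : Matrix (Fin n) (Fin n) ℝ →ₗ[ℝ] (Fin n → ℝ) :=
    { toFun := fun M => M *ᵥ v
      map_add' := fun M N => Matrix.add_mulVec M N v
      map_smul' := fun c M => Matrix.smul_mulVec c M v }
  let L' := LinearMap.toContinuousLinearMap L
  have hs : Summable fun k : ℕ => ((k.factorial : ℝ))⁻¹ • A ^ k := expSeries_summable' A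
  have hpow : ∀ k : ℕ, k ≠ 0 → A ^ k *ᵥ v = 0 := by
    intro k hk
    obtain ⟨m, rfl⟩ := Nat.exists_eq_succ_of_ne_zero hk
    rw [pow_succ, ← Matrix.mulVec_mulVec, h, Matrix.mulVec_zero]
  have key : L' (NormedSpace.exp A) = v := by
    rw [exp_eq_tsum (𝕂 := ℝ), L'.map_tsum hs, tsum_eq_single 0 ?_]
    · simp [L', L]
    · intro k hk
      rw [_root_.map_smul]
      have : L' (A ^ k) = 0 := by simpa [L', L] using hpow k hk
      rw [this, smul_zero]
  exact key


/-- If the rank of the state-dependent probability matrix is 1 or 2,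
then the flux of the 2-dimensional likelihood function of the observed process of a
continuous-time three-state hidden Markov model vanishes. -/
theorem flux_two_dim_likelihood_eq_zero_of_rank_le_two
    (Q : Matrix (Fin 3) (Fin 3) ℝ) (μ : Fin 3 → ℝ)
    {K : ℕ} (E : Matrix (Fin 3) (Fin K) ℝ)
    (hoff : ∀ i j : Fin 3, i ≠ j → 0 ≤ Q i j)
    (hrow : ∀ i : Fin 3, ∑ j, Q i j = 0)
    (hpos : ∀ i, 0 < μ i) (hsum : μ 0 + μ 1 + μ 2 = 1)
    (hstat : μ ᵥ* Q = 0)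
    (hE0 : ∀ a k, 0 ≤ E a k) (hE1 : ∀ a : Fin 3, ∑ k, E a k = 1)
    (hrank : E.rank = 1 ∨ E.rank = 2)
    (t : ℝ) (ht : 0 ≤ t) (i j : Fin K) :
    (μ ᵥ* Matrix.diagonal (fun a => E a i) ᵥ* NormedSpace.exp (t • Q) ᵥ*
        Matrix.diagonal (fun a => E a j)) ⬝ᵥ (fun _ => (1 : ℝ)) =
      (μ ᵥ* Matrix.diagonal (fun a => E a j) ᵥ* NormedSpace.exp (t • Q) ᵥ*
        Matrix.diagonal (fun a => E a i)) ⬝ᵥ (fun _ => (1 : ℝ)) := by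
  set P := NormedSpace.exp (t • Q) with hPdef
  -- P fixes the all-ones vector
  have hQe : (t • Q) *ᵥ (fun _ => (1:ℝ)) = 0 := by
    funext a
    simp [Matrix.mulVec, dotProduct, Matrix.smul_apply, ← Finset.mul_sum, hrow a]
  have hPe : P *ᵥ (fun _ => (1:ℝ)) = fun _ => 1 := exp_mulVec_fixed _ _ hQe
  -- μ is fixed by P on the left
  have hQμ : (t • Q)ᵀ *ᵥ μ = 0 := by
    rw [Matrix.transpose_smul, Matrix.smul_mulVec, Matrix.mulVec_transpose, hstat,
      smul_zero]
  have hμP : μ ᵥ* P = μ := by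
    have h1 : NormedSpace.exp ((t • Q)ᵀ) *ᵥ μ = μ := exp_mulVec_fixed _ _ hQμ
    rw [Matrix.exp_transpose, Matrix.mulVec_transpose] at h1
    exact h1
  have hμP' : ∀ b, ∑ a, μ a * P a b = μ b := by
    intro b
    have := congrFun hμP b
    simpa [Matrix.vecMul, dotProduct] using this
  have hPe' : ∀ a, ∑ b, P a b = 1 := by
    intro a
    have := congrFun hPe a
    simpa [Matrix.mulVec, dotProduct] using this
  -- bilinear form
  set F : (Fin 3 → ℝ) → (Fin 3 → ℝ) → ℝ :=
    fun x y => ∑ a, ∑ b, (μ a * x a) * P a b * y b with hF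
  have hF' : ∀ x y, F x y = ∑ a, ∑ b, (μ a * x a) * P a b * y b := fun x y => rfl
  have expand : ∀ x y : Fin 3 → ℝ,
      (μ ᵥ* Matrix.diagonal x ᵥ* P ᵥ* Matrix.diagonal y) ⬝ᵥ (fun _ => (1:ℝ)) = F x y := by
    intro x y
    have h1 : μ ᵥ* Matrix.diagonal x = fun a => μ a * x a := by
      funext a; exact Matrix.vecMul_diagonal _ _ _
    rw [h1, hF' x y, Finset.sum_comm]
    simp only [dotProduct, Matrix.vecMul_diagonal, mul_one]
    refine Finset.sum_congr rfl fun b _ => ?_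
    simp only [Matrix.vecMul, dotProduct]
    rw [Finset.sum_mul]
  rw [expand, expand]
  -- linearity lemmas
  have Fright : ∀ (x y z : Fin 3 → ℝ) (c d : ℝ),
      F x (fun a => c * y a + d * z a) = c * F x y + d * F x z := by
    intro x y z c d
    simp only [hF']
    simp only [mul_add, Finset.sum_add_distrib, Finset.mul_sum]
    congr 1 <;> refine Finset.sum_congr rfl fun a _ => Finset.sum_congr rfl fun b _ => by ring
  have Fleft : ∀ (x y z : Fin 3 → ℝ) (c d : ℝ),
      F (fun a => c * y a + d * z a) x = c * F y x + d * F z x := by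
    intro x y z c d
    simp only [hF']
    simp only [mul_add, add_mul, mul_assoc, Finset.sum_add_distrib, Finset.mul_sum]
    congr 1 <;> refine Finset.sum_congr rfl fun a _ => Finset.sum_congr rfl fun b _ => by ring
  have Fe_left : ∀ y, F (fun _ => 1) y = ∑ b, μ b * y b := by
    intro y
    rw [hF' _ y, Finset.sum_comm]
    refine Finset.sum_congr rfl fun b _ => ?_
    rw [← hμP' b, Finset.sum_mul]
    refine Finset.sum_congr rfl fun a _ => by ring
  have Fe_right : ∀ x, F x (fun _ => 1) = ∑ a, μ a * x a := by
    intro x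
    rw [hF' x _]
    refine Finset.sum_congr rfl fun a _ => ?_
    simp only [mul_one]
    rw [← Finset.mul_sum, hPe' a, mul_one]
  -- columns and the ones vector lie in the column space
  set φ : Fin K → (Fin 3 → ℝ) := fun k a => E a k with hφdef
  have hmem : ∀ k : Fin K, φ k ∈ LinearMap.range E.mulVecLin := by
    intro k
    refine ⟨Pi.single k 1, ?_⟩
    funext a
    simp [Matrix.mulVecLin, Matrix.mulVec_single, hφdef]
  have hemem : (fun _ => (1:ℝ)) ∈ LinearMap.range E.mulVecLin := by
    refine ⟨fun _ => 1, ?_⟩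
    funext a
    simp [Matrix.mulVecLin, Matrix.mulVec, dotProduct, hE1 a]
  have hrank2 : E.rank ≤ 2 := by rcases hrank with h | h <;> omega
  have hdep : ¬ LinearIndependent ℝ ![(fun _ => (1:ℝ)), φ i, φ j] := by
    intro hli
    have h3 : Module.finrank ℝ
        (Submodule.span ℝ (Set.range ![(fun _ => (1:ℝ)), φ i, φ j])) = 3 := by
      rw [finrank_span_eq_card hli]; simp
    have hle : Submodule.span ℝ (Set.range ![(fun _ => (1:ℝ)), φ i, φ j]) ≤
        LinearMap.range E.mulVecLin := by
      rw [Submodule.span_le]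
      rintro x ⟨k, rfl⟩
      fin_cases k
      · simpa using hemem
      · simpa using hmem i
      · simpa using hmem j
    have hmono := Submodule.finrank_mono hle
    rw [h3] at hmono
    have : E.rank = Module.finrank ℝ (LinearMap.range E.mulVecLin) := rfl
    omega
  obtain ⟨g, hg, k, hk⟩ := Fintype.not_linearIndependent_iff.mp hdep
  have hg' : ∀ a : Fin 3, g 0 * 1 + g 1 * φ i a + g 2 * φ j a = 0 := by
    intro a
    have := congrFun hg a
    simpa [Fin.sum_univ_three, Pi.smul_apply] using this
  by_cases h2 : g 2 ≠ 0
  · -- φ j = c1 • e + c2 • φ i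
    set c1 : ℝ := -(g 0) / g 2
    set c2 : ℝ := -(g 1) / g 2
    have hj : φ j = fun a => c1 * 1 + c2 * φ i a := by
      funext a
      have hc : c1 * 1 + c2 * φ i a = (-(g 0) * 1 + -(g 1) * φ i a) / g 2 := by
        simp only [c1, c2]; ring
      rw [hc, eq_div_iff h2]
      have := hg' a
      linarith
    have h1 : F (φ i) (φ j) = c1 * F (φ i) (fun _ => 1) + c2 * F (φ i) (φ i) := by
      rw [hj]; exact Fright (φ i) (fun _ => 1) (φ i) c1 c2
    have h2' : F (φ j) (φ i) = c1 * F (fun _ => 1) (φ i) + c2 * F (φ i) (φ i) := by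
      rw [hj]; exact Fleft (φ i) (fun _ => 1) (φ i) c1 c2
    rw [h1, h2', Fe_right, Fe_left]
  · push_neg at h2
    by_cases h1 : g 1 ≠ 0
    · -- φ i = c • e
      set c : ℝ := -(g 0) / g 1
      have hi : φ i = fun a => c * 1 + 0 * φ j a := by
        funext a
        have hc : c * 1 + 0 * φ j a = -(g 0) / g 1 := by ring
        rw [hc, eq_div_iff h1]
        have := hg' a
        rw [h2] at this
        linarith
      have ha : F (φ i) (φ j) = c * F (fun _ => 1) (φ j) + 0 * F (φ j) (φ j) := by
        rw [hi]; exact Fleft (φ j) (fun _ => 1) (φ j) c 0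
      have hb : F (φ j) (φ i) = c * F (φ j) (fun _ => 1) + 0 * F (φ j) (φ j) := by
        rw [hi]; exact Fright (φ j) (fun _ => 1) (φ j) c 0
      rw [ha, hb, Fe_right, Fe_left]
    · push_neg at h1
      exfalso
      have h0 : g 0 ≠ 0 := by
        fin_cases k <;> simp_all
      have := hg' 0
      rw [h1, h2] at this
      simp at this
      exact h0 this
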